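/- arXiv:2512.01706 — 2 statements merged into one kernel-verified Lean document; each statement's English description precedes it below -/
import Mathlib

section
/- Stable decomposition bound (abstract Schwarz lemma, lower bound): if for every u ∈ ℝⁿ there exist u₀ ∈ ℝ^{n₀} and uᵢ ∈ ℝ^{mᵢ} with u = Φ u₀ + Σᵢ Rᵢᵀ uᵢ and u₀ᵀ A₀ u₀ + Σᵢ uᵢᵀ Aᵢ uᵢ ≤ C₀² uᵀ A u, then the preconditioned operator M⁻¹A satisfies uᵀ A u ≤ C₀² uᵀ A M⁻¹ A u for all u; in particular the smallest eigenvalue of M⁻¹A (with respect to the A-inner product) is at least C₀⁻². -/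
open Matrix Real

lemma rank_injective {k n : ℕ} (B : Matrix (Fin n) (Fin k) ℝ) (hB : B.rank = k) :
    Function.Injective B.mulVecLin := by
  rw [← LinearMap.ker_eq_bot]
  have h := LinearMap.finrank_range_add_finrank_ker B.mulVecLin
  rw [Matrix.rank] at hB
  simp only [Module.finrank_pi, Fintype.card_fin] at h
  rw [hB] at h
  have : Module.finrank ℝ (LinearMap.ker B.mulVecLin) = 0 := by omega
  exact Submodule.finrank_eq_zero.mp this

lemma posdef_conj {k n : ℕ} {A : Matrix (Fin n) (Fin n) ℝ} (hA : A.PosDef)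
    (B : Matrix (Fin n) (Fin k) ℝ) (hB : B.rank = k) : (Bᵀ * A * B).PosDef := by
  have hsemi := hA.posSemidef.conjTranspose_mul_mul_same B
  rw [show Bᴴ = Bᵀ from rfl] at hsemi
  refine .of_dotProduct_mulVec_pos hsemi.isHermitian fun x hx => ?_
  have hBx : B *ᵥ x ≠ 0 := by
    intro h
    exact hx (rank_injective B hB (by simpa using h))
  have := hA.dotProduct_mulVec_pos hBx
  simpa [star_trivial, Matrix.mul_assoc, ← Matrix.mulVec_mulVec, Matrix.dotProduct_mulVec,
    Matrix.vecMul_transpose] using this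

lemma posdef_nonneg {k : ℕ} {B : Matrix (Fin k) (Fin k) ℝ} (hB : B.PosDef)
    (x : Fin k → ℝ) : 0 ≤ x ⬝ᵥ B *ᵥ x := by
  simpa [star_trivial] using hB.posSemidef.dotProduct_mulVec_nonneg x

lemma dot_symm {k : ℕ} {B : Matrix (Fin k) (Fin k) ℝ} (hB : B.IsHermitian)
    (x y : Fin k → ℝ) : x ⬝ᵥ B *ᵥ y = y ⬝ᵥ B *ᵥ x := by
  rw [Matrix.dotProduct_mulVec, ← Matrix.mulVec_transpose,
    show Bᵀ = B from hB, dotProduct_comm]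

lemma cs_aux {a b c : ℝ} (ha0 : 0 ≤ a) (hb0 : 0 ≤ b)
    (hexp : ∀ t : ℝ, 0 ≤ a - 2 * t * c + t ^ 2 * b) : c ^ 2 ≤ a * b := by
  rcases eq_or_lt_of_le hb0 with hb | hb
  · have hc : c = 0 := by
      by_contra hc
      have := hexp ((a + 1) / (2 * c))
      rw [← hb] at this
      have h2 : (a+1)/(2*c) * c = (a+1)/2 := by field_simp
      nlinarith [this]
    simp [hc]
    positivity
  · have := hexp (c / b)
    have h2 : c / b * c = c ^ 2 / b := by ring
    have h3 : (c / b) ^ 2 * b = c ^ 2 / b := by field_simp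
    rw [h3] at this
    have h4 : 0 ≤ a - c ^ 2 / b := by nlinarith [this]
    have := mul_le_mul_of_nonneg_right (by linarith : c ^ 2 / b ≤ a) (le_of_lt hb)
    rwa [div_mul_cancel₀ _ (ne_of_gt hb)] at this

lemma posdef_cs {k : ℕ} {B : Matrix (Fin k) (Fin k) ℝ} (hB : B.PosDef)
    (x y : Fin k → ℝ) : x ⬝ᵥ B *ᵥ y ≤ √(x ⬝ᵥ B *ᵥ x) * √(y ⬝ᵥ B *ᵥ y) := by
  have ha0 : 0 ≤ x ⬝ᵥ B *ᵥ x := posdef_nonneg hB x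
  have hb0 : 0 ≤ y ⬝ᵥ B *ᵥ y := posdef_nonneg hB y
  have hexp : ∀ t : ℝ, 0 ≤ (x ⬝ᵥ B *ᵥ x) - 2 * t * (x ⬝ᵥ B *ᵥ y) + t ^ 2 * (y ⬝ᵥ B *ᵥ y) := by
    intro t
    have h := posdef_nonneg hB (x - t • y)
    have hsym := dot_symm hB.isHermitian y x
    simp only [sub_dotProduct, dotProduct_sub, Matrix.mulVec_sub,
      Matrix.mulVec_smul, smul_dotProduct, dotProduct_smul,
      smul_eq_mul] at h
    rw [hsym] at h
    nlinarith [h]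
  have key := cs_aux ha0 hb0 hexp
  calc x ⬝ᵥ B *ᵥ y ≤ |x ⬝ᵥ B *ᵥ y| := le_abs_self _
    _ = √((x ⬝ᵥ B *ᵥ y) ^ 2) := (Real.sqrt_sq_eq_abs _).symm
    _ ≤ √((x ⬝ᵥ B *ᵥ x) * (y ⬝ᵥ B *ᵥ y)) := Real.sqrt_le_sqrt key
    _ = √(x ⬝ᵥ B *ᵥ x) * √(y ⬝ᵥ B *ᵥ y) := Real.sqrt_mul ha0 _

lemma dot_sum_right {n N : ℕ} (w : Fin n → ℝ) (f : Fin N → Fin n → ℝ) :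
    w ⬝ᵥ (∑ i, f i) = ∑ i, w ⬝ᵥ f i := by
  simp only [dotProduct, Finset.sum_apply, Finset.mul_sum]
  exact Finset.sum_comm

lemma sum_mulVec' {n N : ℕ} (M : Fin N → Matrix (Fin n) (Fin n) ℝ) (w : Fin n → ℝ) :
    (∑ i, M i) *ᵥ w = ∑ i, M i *ᵥ w := by
  ext j
  simp only [Matrix.mulVec, dotProduct, Matrix.sum_apply, Finset.sum_apply,
    Finset.sum_mul]
  exact Finset.sum_comm

lemma dual_cs {k : ℕ} {B : Matrix (Fin k) (Fin k) ℝ} (hB : B.PosDef)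
    (v x : Fin k → ℝ) : v ⬝ᵥ x ≤ √(x ⬝ᵥ B *ᵥ x) * √(v ⬝ᵥ B⁻¹ *ᵥ v) := by
  have hdet : IsUnit B.det := isUnit_iff_ne_zero.mpr (ne_of_gt hB.det_pos)
  have hBy : B *ᵥ (B⁻¹ *ᵥ v) = v := by
    rw [Matrix.mulVec_mulVec, Matrix.mul_nonsing_inv _ hdet, Matrix.one_mulVec]
  have h1 : v ⬝ᵥ x = x ⬝ᵥ B *ᵥ (B⁻¹ *ᵥ v) := by
    rw [hBy, dotProduct_comm]
  have h2 : (B⁻¹ *ᵥ v) ⬝ᵥ B *ᵥ (B⁻¹ *ᵥ v) = v ⬝ᵥ B⁻¹ *ᵥ v := by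
    rw [hBy, dotProduct_comm]
  calc v ⬝ᵥ x = x ⬝ᵥ B *ᵥ (B⁻¹ *ᵥ v) := h1
    _ ≤ √(x ⬝ᵥ B *ᵥ x) * √((B⁻¹ *ᵥ v) ⬝ᵥ B *ᵥ (B⁻¹ *ᵥ v)) := posdef_cs hB _ _
    _ = √(x ⬝ᵥ B *ᵥ x) * √(v ⬝ᵥ B⁻¹ *ᵥ v) := by rw [h2]

lemma sqrt_two_combine {a b c d : ℝ} (ha : 0 ≤ a) (hb : 0 ≤ b) (hc : 0 ≤ c) (hd : 0 ≤ d) :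
    √a * √b + √c * √d ≤ √(a + c) * √(b + d) := by
  rw [← Real.sqrt_mul (by linarith) (b + d)]
  apply Real.le_sqrt_of_sq_le
  have h1 := Real.sq_sqrt ha
  have h2 := Real.sq_sqrt hb
  have h3 := Real.sq_sqrt hc
  have h4 := Real.sq_sqrt hd
  nlinarith [sq_nonneg (√a * √d - √c * √b), Real.sqrt_nonneg a, Real.sqrt_nonneg b,
    Real.sqrt_nonneg c, Real.sqrt_nonneg d]

open Matrix

/-- The two-level additive Schwarz preconditioner. -/
noncomputable def twoLevelOAS {n n₀ N : ℕ} {m : Fin N → ℕ}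
    (A : Matrix (Fin n) (Fin n) ℝ)
    (R : (i : Fin N) → Matrix (Fin (m i)) (Fin n) ℝ)
    (Φ : Matrix (Fin n) (Fin n₀) ℝ) : Matrix (Fin n) (Fin n) ℝ :=
  Φ * (Φᵀ * A * Φ)⁻¹ * Φᵀ + ∑ i, (R i)ᵀ * (R i * A * (R i)ᵀ)⁻¹ * R i

/-- Abstract Schwarz lemma (lower bound): a stable decomposition with constant
`C₀²` implies `uᵀ A u ≤ C₀² uᵀ A M⁻¹ A u` for all `u`. -/
theorem stable_decomposition_lower_bound {n n₀ N : ℕ} {m : Fin N → ℕ}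
    (A : Matrix (Fin n) (Fin n) ℝ) (hA : A.PosDef)
    (R : (i : Fin N) → Matrix (Fin (m i)) (Fin n) ℝ)
    (hR : ∀ i, (R i).rank = m i)
    (Φ : Matrix (Fin n) (Fin n₀) ℝ) (hΦ : Φ.rank = n₀)
    (C₀ : ℝ) (hC₀ : 0 < C₀)
    (hstable : ∀ u : Fin n → ℝ, ∃ u₀ : Fin n₀ → ℝ,
      ∃ uloc : (i : Fin N) → Fin (m i) → ℝ,
        u = Φ *ᵥ u₀ + ∑ i, (R i)ᵀ *ᵥ uloc i ∧
        u₀ ⬝ᵥ ((Φᵀ * A * Φ) *ᵥ u₀) +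
            ∑ i, uloc i ⬝ᵥ ((R i * A * (R i)ᵀ) *ᵥ uloc i) ≤
          C₀ ^ 2 * (u ⬝ᵥ (A *ᵥ u))) :
    ∀ u : Fin n → ℝ,
      u ⬝ᵥ (A *ᵥ u) ≤ C₀ ^ 2 * (u ⬝ᵥ (A *ᵥ (twoLevelOAS A R Φ *ᵥ (A *ᵥ u)))) := by
  intro u
  obtain ⟨u₀, uloc, hdecomp, hbound⟩ := hstable u
  have hA₀ : (Φᵀ * A * Φ).PosDef := posdef_conj hA Φ hΦ
  have hAi : ∀ i, (R i * A * (R i)ᵀ).PosDef := fun i => by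
    have := posdef_conj hA (R i)ᵀ (by rw [Matrix.rank_transpose]; exact hR i)
    simpa [Matrix.transpose_transpose] using this
  set w : Fin n → ℝ := A *ᵥ u with hw
  set v₀ : Fin n₀ → ℝ := Φᵀ *ᵥ w with hv₀
  set vv : (i : Fin N) → Fin (m i) → ℝ := fun i => R i *ᵥ w with hvv
  set P : ℝ := u ⬝ᵥ (A *ᵥ u) with hPdef
  set s₀ : ℝ := u₀ ⬝ᵥ ((Φᵀ * A * Φ) *ᵥ u₀) with hs₀
  set si : Fin N → ℝ := fun i => uloc i ⬝ᵥ ((R i * A * (R i)ᵀ) *ᵥ uloc i) with hsi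
  set t₀ : ℝ := v₀ ⬝ᵥ ((Φᵀ * A * Φ)⁻¹ *ᵥ v₀) with ht₀
  set ti : Fin N → ℝ := fun i => vv i ⬝ᵥ ((R i * A * (R i)ᵀ)⁻¹ *ᵥ vv i) with hti
  have hs₀0 : 0 ≤ s₀ := posdef_nonneg hA₀ u₀
  have hsi0 : ∀ i, 0 ≤ si i := fun i => posdef_nonneg (hAi i) (uloc i)
  have ht₀0 : 0 ≤ t₀ := posdef_nonneg hA₀.inv v₀
  have hti0 : ∀ i, 0 ≤ ti i := fun i => posdef_nonneg (hAi i).inv (vv i)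
  have hP0 : 0 ≤ P := posdef_nonneg hA u
  -- P as sum of pairings
  have hP : P = v₀ ⬝ᵥ u₀ + ∑ i, vv i ⬝ᵥ uloc i := by
    calc P = w ⬝ᵥ u := dotProduct_comm _ _
      _ = w ⬝ᵥ (Φ *ᵥ u₀ + ∑ i, (R i)ᵀ *ᵥ uloc i) := by rw [← hdecomp]
      _ = w ⬝ᵥ (Φ *ᵥ u₀) + ∑ i, w ⬝ᵥ ((R i)ᵀ *ᵥ uloc i) := by
          rw [dotProduct_add, dot_sum_right]
      _ = v₀ ⬝ᵥ u₀ + ∑ i, vv i ⬝ᵥ uloc i := by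
          congr 1
          · rw [Matrix.dotProduct_mulVec, ← Matrix.mulVec_transpose]
          · refine Finset.sum_congr rfl fun i _ => ?_
            rw [Matrix.dotProduct_mulVec, ← Matrix.mulVec_transpose,
              Matrix.transpose_transpose]
  -- T identity
  have hT : u ⬝ᵥ (A *ᵥ (twoLevelOAS A R Φ *ᵥ w)) = t₀ + ∑ i, ti i := by
    have hwz : ∀ z : Fin n → ℝ, u ⬝ᵥ (A *ᵥ z) = w ⬝ᵥ z := by
      intro z
      rw [Matrix.dotProduct_mulVec, ← Matrix.mulVec_transpose,
        show Aᵀ = A from hA.isHermitian, hw]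
    rw [hwz]
    rw [twoLevelOAS, Matrix.add_mulVec, dotProduct_add, sum_mulVec', dot_sum_right]
    congr 1
    · rw [← Matrix.mulVec_mulVec, ← Matrix.mulVec_mulVec,
        Matrix.dotProduct_mulVec, ← Matrix.mulVec_transpose, ← hv₀, ht₀]
    · refine Finset.sum_congr rfl fun i _ => ?_
      rw [← Matrix.mulVec_mulVec, ← Matrix.mulVec_mulVec,
        Matrix.dotProduct_mulVec, ← Matrix.mulVec_transpose,
        Matrix.transpose_transpose, hti]
  set T : ℝ := t₀ + ∑ i, ti i with hTdef
  have hT0 : 0 ≤ T := add_nonneg ht₀0 (Finset.sum_nonneg fun i _ => hti0 i)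
  -- Cauchy-Schwarz chain
  have hchain : P ≤ √(s₀ + ∑ i, si i) * √T := by
    rw [hP]
    calc v₀ ⬝ᵥ u₀ + ∑ i, vv i ⬝ᵥ uloc i
        ≤ √s₀ * √t₀ + ∑ i, √(si i) * √(ti i) := by
          exact add_le_add (dual_cs hA₀ v₀ u₀)
            (Finset.sum_le_sum fun i _ => dual_cs (hAi i) (vv i) (uloc i))
      _ ≤ √s₀ * √t₀ + √(∑ i, si i) * √(∑ i, ti i) := by
          refine add_le_add_right (Real.sum_sqrt_mul_sqrt_le (f := si) (g := ti) Finset.univ hsi0 hti0) _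
      _ ≤ √(s₀ + ∑ i, si i) * √(t₀ + ∑ i, ti i) :=
          sqrt_two_combine hs₀0 ht₀0 (Finset.sum_nonneg fun i _ => hsi0 i)
            (Finset.sum_nonneg fun i _ => hti0 i)
  have hSB : √(s₀ + ∑ i, si i) ≤ C₀ * √P := by
    calc √(s₀ + ∑ i, si i) ≤ √(C₀ ^ 2 * P) := Real.sqrt_le_sqrt hbound
      _ = C₀ * √P := by
          rw [Real.sqrt_mul (by positivity), Real.sqrt_sq hC₀.le]
  have hfinal : P ≤ C₀ * √P * √T := by
    calc P ≤ √(s₀ + ∑ i, si i) * √T := hchain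
      _ ≤ (C₀ * √P) * √T := by
          exact mul_le_mul_of_nonneg_right hSB (Real.sqrt_nonneg T)
  rw [hT]
  rcases eq_or_lt_of_le hP0 with h0 | h0
  · rw [← h0]
    positivity
  · have hsq : P ^ 2 ≤ C₀ ^ 2 * P * T := by
      have h1 : P * P ≤ (C₀ * √P * √T) * (C₀ * √P * √T) := by
        exact mul_le_mul hfinal hfinal hP0 (by positivity)
      have h2 : (C₀ * √P * √T) * (C₀ * √P * √T) = C₀ ^ 2 * (√P ^ 2) * (√T ^ 2) := by ring
      rw [h2, Real.sq_sqrt hP0, Real.sq_sqrt hT0] at h1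
      nlinarith [h1]
    refine le_of_mul_le_mul_right ?_ h0
    nlinarith [hsq]
end

section
/- Convergence of the penalty formulation at the linear-algebra level: let A, B be real matrices with A ∈ ℝ^{n×n} SPD and B ∈ ℝ^{m×n} of full row rank, and consider the penalized system (A + ε⁻¹ BᵀB) u_ε = f. Then as ε → 0, u_ε converges to the solution u of the constrained saddle point problem A u + Bᵀ p = f, B u = 0; specifically, ‖u_ε − u‖ = O(ε). -/
open Matrix

lemma dot_le_card {k : ℕ} (x y : Fin k → ℝ) : x ⬝ᵥ y ≤ (k : ℝ) * ‖x‖ * ‖y‖ := by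
  classical
  calc x ⬝ᵥ y = ∑ i, x i * y i := rfl
    _ ≤ ∑ _ : Fin k, ‖x‖ * ‖y‖ := by
        refine Finset.sum_le_sum fun i _ => ?_
        calc x i * y i ≤ |x i * y i| := le_abs_self _
          _ = |x i| * |y i| := abs_mul _ _
          _ ≤ ‖x‖ * ‖y‖ := by
              have h1 : |x i| ≤ ‖x‖ := norm_le_pi_norm x i
              have h2 : |y i| ≤ ‖y‖ := norm_le_pi_norm y i
              exact mul_le_mul h1 h2 (abs_nonneg _) (norm_nonneg _)
    _ = (k : ℝ) * ‖x‖ * ‖y‖ := by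
        rw [Finset.sum_const, Finset.card_univ, Fintype.card_fin]
        ring

lemma mulVec_norm_le {a b : ℕ} (M : Matrix (Fin a) (Fin b) ℝ) (x : Fin b → ℝ) :
    ‖M *ᵥ x‖ ≤ (∑ i, ∑ j, |M i j|) * ‖x‖ := by
  classical
  have hK : (0:ℝ) ≤ (∑ i, ∑ j, |M i j|) :=
    Finset.sum_nonneg fun i _ => Finset.sum_nonneg fun j _ => abs_nonneg _
  rw [pi_norm_le_iff_of_nonneg (mul_nonneg hK (norm_nonneg _))]
  intro i
  calc ‖(M *ᵥ x) i‖ = |∑ j, M i j * x j| := rfl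
    _ ≤ ∑ j, |M i j * x j| := Finset.abs_sum_le_sum_abs _ _
    _ ≤ ∑ j, |M i j| * ‖x‖ := by
        refine Finset.sum_le_sum fun j _ => ?_
        rw [abs_mul]
        exact mul_le_mul_of_nonneg_left (norm_le_pi_norm x j) (abs_nonneg _)
    _ = (∑ j, |M i j|) * ‖x‖ := (Finset.sum_mul _ _ _).symm
    _ ≤ (∑ i, ∑ j, |M i j|) * ‖x‖ := by
        refine mul_le_mul_of_nonneg_right ?_ (norm_nonneg _)
        exact Finset.single_le_sum (f := fun i => ∑ j, |M i j|)
          (fun i _ => Finset.sum_nonneg fun j _ => abs_nonneg _) (Finset.mem_univ i)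

lemma posdef_coercive {k : ℕ} {M : Matrix (Fin k) (Fin k) ℝ} (hM : M.PosDef) :
    ∃ μ : ℝ, 0 < μ ∧ ∀ x : Fin k → ℝ, μ * ‖x‖ ^ 2 ≤ x ⬝ᵥ (M *ᵥ x) := by
  classical
  rcases Nat.eq_zero_or_pos k with hk | hk
  · refine ⟨1, one_pos, fun x => ?_⟩
    subst hk
    have hx : x = 0 := Subsingleton.elim _ _
    have h0 : x ⬝ᵥ (M *ᵥ x) = 0 := by simp [dotProduct]
    have hn : ‖x‖ = 0 := by rw [hx, norm_zero]
    rw [h0, hn]; norm_num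
  · haveI : Nonempty (Fin k) := ⟨⟨0, hk⟩⟩
    have hcont : Continuous fun x : Fin k → ℝ => x ⬝ᵥ (M *ᵥ x) := by
      unfold dotProduct Matrix.mulVec
      exact continuous_finset_sum _ fun i _ => (continuous_apply i).mul
        (continuous_finset_sum _ fun j _ => continuous_const.mul (continuous_apply j))
    have hsph : (Metric.sphere (0 : Fin k → ℝ) 1).Nonempty :=
      NormedSpace.sphere_nonempty.mpr zero_le_one
    obtain ⟨x₀, hx₀, hmin⟩ := (isCompact_sphere (0 : Fin k → ℝ) 1).exists_isMinOn hsph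
      hcont.continuousOn
    have hx₀norm : ‖x₀‖ = 1 := by simpa using hx₀
    have hx₀ne : x₀ ≠ 0 := by
      intro h; rw [h, norm_zero] at hx₀norm; norm_num at hx₀norm
    refine ⟨x₀ ⬝ᵥ (M *ᵥ x₀), by simpa using hM.dotProduct_mulVec_pos hx₀ne, fun x => ?_⟩
    rcases eq_or_ne x 0 with hx | hx
    · simp [hx]
    · have hxn : 0 < ‖x‖ := norm_pos_iff.mpr hx
      set y : Fin k → ℝ := ‖x‖⁻¹ • x with hy
      have hyn : ‖y‖ = 1 := by
        rw [hy, norm_smul, norm_inv, norm_norm, inv_mul_cancel₀ hxn.ne']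
      have hmem : y ∈ Metric.sphere (0 : Fin k → ℝ) 1 := by simpa using hyn
      have hxy : x = ‖x‖ • y := by
        rw [hy, smul_smul, mul_inv_cancel₀ hxn.ne', one_smul]
      have hq : x ⬝ᵥ (M *ᵥ x) = ‖x‖ ^ 2 * (y ⬝ᵥ (M *ᵥ y)) := by
        conv_lhs => rw [hxy]
        rw [mulVec_smul, dotProduct_smul, smul_dotProduct, smul_eq_mul, smul_eq_mul]
        ring
      rw [hq]
      have h2 : x₀ ⬝ᵥ (M *ᵥ x₀) ≤ y ⬝ᵥ (M *ᵥ y) := hmin hmem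
      nlinarith [h2, sq_nonneg ‖x‖]

lemma dotProduct_self_nonneg' {k : ℕ} (v : Fin k → ℝ) : 0 ≤ v ⬝ᵥ v :=
  Finset.sum_nonneg fun i _ => mul_self_nonneg _

lemma dot_BtB {a b : ℕ} (B : Matrix (Fin a) (Fin b) ℝ) (x : Fin a → ℝ) :
    x ⬝ᵥ ((B * Bᵀ) *ᵥ x) = (Bᵀ *ᵥ x) ⬝ᵥ (Bᵀ *ᵥ x) := by
  rw [← mulVec_mulVec, dotProduct_mulVec, ← mulVec_transpose]

lemma dot_BtB' {a b : ℕ} (B : Matrix (Fin a) (Fin b) ℝ) (x : Fin b → ℝ) :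
    x ⬝ᵥ ((Bᵀ * B) *ᵥ x) = (B *ᵥ x) ⬝ᵥ (B *ᵥ x) := by
  have h := dot_BtB Bᵀ x
  rwa [transpose_transpose] at h

set_option maxHeartbeats 1600000 in
/-- Convergence of the penalty formulation at the linear-algebra level: the
solution `u_ε` of the penalized system `(A + ε⁻¹ BᵀB) u_ε = f` converges with
rate `O(ε)` to the solution `u` of the saddle point problem
`A u + Bᵀ p = f`, `B u = 0`. -/
theorem penalty_convergence {n m : ℕ}
    (A : Matrix (Fin n) (Fin n) ℝ) (hA : A.PosDef)
    (B : Matrix (Fin m) (Fin n) ℝ) (hB : B.rank = m)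
    (f u : Fin n → ℝ) (p : Fin m → ℝ)
    (hsaddle₁ : A *ᵥ u + Bᵀ *ᵥ p = f)
    (hsaddle₂ : B *ᵥ u = 0) :
    ∃ C : ℝ, ∀ ε : ℝ, 0 < ε →
      ‖(A + ε⁻¹ • (Bᵀ * B))⁻¹ *ᵥ f - u‖ ≤ C * ε := by
  classical
  -- injectivity of `Bᵀ *ᵥ ·`
  have hBt_inj : ∀ q : Fin m → ℝ, Bᵀ *ᵥ q = 0 → q = 0 := by
    have hrank : (Bᵀ).rank = m := by rw [Matrix.rank_transpose, hB]
    have hker : LinearMap.ker (Bᵀ).mulVecLin = ⊥ := by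
      have h := LinearMap.finrank_range_add_finrank_ker ((Bᵀ).mulVecLin)
      have hdom : Module.finrank ℝ (Fin m → ℝ) = m := by simp
      rw [hdom] at h
      have hr : Module.finrank ℝ (LinearMap.range (Bᵀ).mulVecLin) = m := hrank
      have h0 : Module.finrank ℝ (LinearMap.ker (Bᵀ).mulVecLin) = 0 := by omega
      exact Submodule.finrank_eq_zero.mp h0
    intro q hq
    have hmem : q ∈ LinearMap.ker (Bᵀ).mulVecLin := by
      rw [LinearMap.mem_ker, Matrix.mulVecLin_apply]
      exact hq
    rw [hker] at hmem
    simpa using hmem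
  -- `B * Bᵀ` is positive definite
  have hBBt : (B * Bᵀ).PosDef := by
    rw [posDef_iff_dotProduct_mulVec]
    constructor
    · simpa [conjTranspose_eq_transpose_of_trivial] using
        Matrix.isHermitian_mul_conjTranspose_self B
    · intro x hx
      simp only [star_trivial]
      rw [dot_BtB]
      have hne : Bᵀ *ᵥ x ≠ 0 := fun h => hx (hBt_inj x h)
      have h0 : (Bᵀ *ᵥ x) ⬝ᵥ (Bᵀ *ᵥ x) ≠ 0 := fun h => hne (dotProduct_self_eq_zero.mp h)
      exact lt_of_le_of_ne (dotProduct_self_nonneg' _) (Ne.symm h0)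
  obtain ⟨μA, hμA, hcoA⟩ := posdef_coercive hA
  obtain ⟨μC, hμC, hcoC⟩ := posdef_coercive hBBt
  set K : ℝ := ∑ i, ∑ j, |A i j| with hK
  have hK0 : 0 ≤ K := Finset.sum_nonneg fun i _ => Finset.sum_nonneg fun j _ => abs_nonneg _
  set c₂ : ℝ := Real.sqrt ((n : ℝ) * K ^ 2 / μC) with hc₂
  have hc₂0 : 0 ≤ c₂ := Real.sqrt_nonneg _
  refine ⟨(m : ℝ) * ‖p‖ * c₂ / μA, fun ε hε => ?_⟩
  have hC0 : 0 ≤ (m : ℝ) * ‖p‖ * c₂ / μA := by positivity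
  set M : Matrix (Fin n) (Fin n) ℝ := A + ε⁻¹ • (Bᵀ * B) with hMdef
  -- `M` is positive definite
  have hMpd : M.PosDef := by
    rw [posDef_iff_dotProduct_mulVec]
    constructor
    · have hS : (Bᵀ * B).IsHermitian := by
        simpa [conjTranspose_eq_transpose_of_trivial] using
          Matrix.isHermitian_conjTranspose_mul_self B
      have hS' : (ε⁻¹ • (Bᵀ * B)).IsHermitian := by
        unfold Matrix.IsHermitian at *
        rw [conjTranspose_smul, hS, star_trivial]
      exact hA.isHermitian.add hS'
    · intro x hx
      have hexp : x ⬝ᵥ (M *ᵥ x) = x ⬝ᵥ (A *ᵥ x) + ε⁻¹ * ((B *ᵥ x) ⬝ᵥ (B *ᵥ x)) := by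
        rw [hMdef, add_mulVec, dotProduct_add, smul_mulVec, dotProduct_smul,
          dot_BtB', smul_eq_mul]
      simp only [star_trivial]
      rw [hexp]
      have := hA.dotProduct_mulVec_pos hx
      simp only [star_trivial] at this
      have h2 : 0 ≤ ε⁻¹ * ((B *ᵥ x) ⬝ᵥ (B *ᵥ x)) :=
        mul_nonneg (inv_nonneg.mpr hε.le) (dotProduct_self_nonneg' _)
      linarith
  have hMdet : IsUnit M.det := (Matrix.isUnit_iff_isUnit_det M).mp hMpd.isUnit
  have hMf : M *ᵥ (M⁻¹ *ᵥ f) = f := by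
    rw [mulVec_mulVec, Matrix.mul_nonsing_inv _ hMdet, one_mulVec]
  set e : Fin n → ℝ := M⁻¹ *ᵥ f - u with he
  have hMe : M *ᵥ e = Bᵀ *ᵥ p := by
    rw [he, mulVec_sub, hMf]
    rw [hMdef, add_mulVec, smul_mulVec, ← mulVec_mulVec, hsaddle₂, mulVec_zero,
      smul_zero, add_zero, ← hsaddle₁]
    abel
  set w : Fin m → ℝ := B *ᵥ e with hw
  set d : Fin m → ℝ := p - ε⁻¹ • w with hd
  have hAe : A *ᵥ e = Bᵀ *ᵥ d := by
    have h1 : A *ᵥ e + ε⁻¹ • (Bᵀ *ᵥ w) = Bᵀ *ᵥ p := by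
      rw [← hMe, hMdef, add_mulVec, smul_mulVec, ← mulVec_mulVec]
    have h2 := eq_sub_of_add_eq h1
    rw [h2, hd, mulVec_sub, mulVec_smul]
  have hwd : w = ε • (p - d) := by
    rw [hd]
    rw [sub_sub_cancel, smul_smul, mul_inv_cancel₀ hε.ne', one_smul]
  have q1 : e ⬝ᵥ (A *ᵥ e) = w ⬝ᵥ d := by
    rw [hAe, dotProduct_mulVec, vecMul_transpose]
  have q2 : w ⬝ᵥ d = ε * (p ⬝ᵥ d) - ε * (d ⬝ᵥ d) := by
    rw [hwd, smul_dotProduct, sub_dotProduct, smul_eq_mul, mul_sub]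
  -- first estimate
  have i1 : μA * ‖e‖ ^ 2 ≤ ε * ((m : ℝ) * ‖p‖ * ‖d‖) := by
    have ha := hcoA e
    have hb : p ⬝ᵥ d ≤ (m : ℝ) * ‖p‖ * ‖d‖ := dot_le_card p d
    have hc : 0 ≤ d ⬝ᵥ d := dotProduct_self_nonneg' _
    have hd1 : e ⬝ᵥ (A *ᵥ e) ≤ ε * ((m : ℝ) * ‖p‖ * ‖d‖) := by
      rw [q1, q2]
      have := mul_le_mul_of_nonneg_left hb hε.le
      nlinarith
    linarith
  -- second estimate : ‖d‖ ≤ c₂ * ‖e‖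
  have i2 : ‖d‖ ≤ c₂ * ‖e‖ := by
    have ha := hcoC d
    have hb : d ⬝ᵥ ((B * Bᵀ) *ᵥ d) = (A *ᵥ e) ⬝ᵥ (A *ᵥ e) := by
      rw [dot_BtB, ← hAe]
    have hc : (A *ᵥ e) ⬝ᵥ (A *ᵥ e) ≤ (n : ℝ) * ‖A *ᵥ e‖ * ‖A *ᵥ e‖ := dot_le_card _ _
    have hd1 : ‖A *ᵥ e‖ ≤ K * ‖e‖ := mulVec_norm_le A e
    have h5 : ‖A *ᵥ e‖ * ‖A *ᵥ e‖ ≤ (K * ‖e‖) * (K * ‖e‖) :=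
      mul_le_mul hd1 hd1 (norm_nonneg _) (by positivity)
    have h6 : (n : ℝ) * (‖A *ᵥ e‖ * ‖A *ᵥ e‖) ≤ (n : ℝ) * ((K * ‖e‖) * (K * ‖e‖)) :=
      mul_le_mul_of_nonneg_left h5 (Nat.cast_nonneg n)
    have hsq : ‖d‖ ^ 2 ≤ ((n : ℝ) * K ^ 2 / μC) * ‖e‖ ^ 2 := by
      rw [div_mul_eq_mul_div, le_div_iff₀ hμC]
      nlinarith [ha, hb, hc, h6]
    have h1 : ‖d‖ ^ 2 ≤ (c₂ * ‖e‖) ^ 2 := by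
      have : (c₂ * ‖e‖) ^ 2 = ((n : ℝ) * K ^ 2 / μC) * ‖e‖ ^ 2 := by
        rw [mul_pow, hc₂, Real.sq_sqrt (by positivity)]
      linarith [this ▸ hsq]
    calc ‖d‖ = Real.sqrt (‖d‖ ^ 2) := (Real.sqrt_sq (norm_nonneg _)).symm
      _ ≤ Real.sqrt ((c₂ * ‖e‖) ^ 2) := Real.sqrt_le_sqrt h1
      _ = c₂ * ‖e‖ := Real.sqrt_sq (by positivity)
  -- combine
  show ‖e‖ ≤ (m : ℝ) * ‖p‖ * c₂ / μA * ε
  rcases eq_or_lt_of_le (norm_nonneg e) with h0 | h0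
  · rw [← h0]
    positivity
  · have hchain : μA * ‖e‖ ^ 2 ≤ ε * ((m : ℝ) * ‖p‖ * (c₂ * ‖e‖)) := by
      calc μA * ‖e‖ ^ 2 ≤ ε * ((m : ℝ) * ‖p‖ * ‖d‖) := i1
        _ ≤ ε * ((m : ℝ) * ‖p‖ * (c₂ * ‖e‖)) := by
            have : (m : ℝ) * ‖p‖ * ‖d‖ ≤ (m : ℝ) * ‖p‖ * (c₂ * ‖e‖) :=
              mul_le_mul_of_nonneg_left i2 (by positivity)
            exact mul_le_mul_of_nonneg_left this hε.le
    rw [div_mul_eq_mul_div, le_div_iff₀ hμA]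
    have hcancel : μA * ‖e‖ ≤ ε * ((m : ℝ) * ‖p‖ * c₂) := by
      have := le_of_mul_le_mul_right (by nlinarith : μA * ‖e‖ * ‖e‖ ≤ ε * ((m : ℝ) * ‖p‖ * c₂) * ‖e‖) h0
      exact this
    nlinarith
end
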